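/- For any finite simple graph G and any positive integer r, it holds that tree-α(G^{r+2}) ≤ tree-α(G^r) and tree-μ(G^{r+2}) ≤ tree-μ(G^r). -/

import Mathlib

open SimpleGraph

namespace Paper

/-- A tree decomposition of a graph `G`. -/
structure TreeDecomp {V : Type} (G : SimpleGraph V) where
  ι : Type
  fin : Fintype ι
  tree : SimpleGraph ι
  isTree : tree.IsTree
  bag : ι → Set V
  mem_bag : ∀ v : V, ∃ t, v ∈ bag t
  edge_bag : ∀ ⦃u w : V⦄, G.Adj u w → ∃ t, u ∈ bag t ∧ w ∈ bag t
  coherent : ∀ v : V, (tree.induce {t | v ∈ bag t}).Connected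

/-- `M` is an induced matching in `G`: a set of edges, pairwise disjoint,
with no edge of `G` joining endpoints of distinct edges of `M`. -/
def IsInducedMatching {V : Type} (G : SimpleGraph V) (M : Finset (V × V)) : Prop :=
  (∀ p ∈ M, G.Adj p.1 p.2) ∧
    ∀ p ∈ M, ∀ q ∈ M, p ≠ q →
      (p.1 ≠ q.1 ∧ p.1 ≠ q.2 ∧ p.2 ≠ q.1 ∧ p.2 ≠ q.2) ∧
      (¬ G.Adj p.1 q.1 ∧ ¬ G.Adj p.1 q.2 ∧ ¬ G.Adj p.2 q.1 ∧ ¬ G.Adj p.2 q.2)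

/-- Every edge of `M` has an endpoint in `X`. -/
def Touches {V : Type} (M : Finset (V × V)) (X : Set V) : Prop :=
  ∀ p ∈ M, p.1 ∈ X ∨ p.2 ∈ X

/-- μ(𝒯): the maximum size of an induced matching of `G` all of whose edges
touch a common bag of the tree decomposition `D`. -/
noncomputable def mu {V : Type} (G : SimpleGraph V) (D : TreeDecomp G) : ℕ :=
  sSup {n | ∃ (t : D.ι) (M : Finset (V × V)),
    IsInducedMatching G M ∧ Touches M (D.bag t) ∧ M.card = n}

/-- Induced matching treewidth: minimum of μ(𝒯) over tree decompositions. -/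
noncomputable def treeMu {V : Type} (G : SimpleGraph V) : ℕ :=
  sInf {n | ∃ D : TreeDecomp G, mu G D = n}

/-- `S` is an independent set of `G`. -/
def IsIndepSet {V : Type} (G : SimpleGraph V) (S : Finset V) : Prop :=
  ∀ u ∈ S, ∀ v ∈ S, u ≠ v → ¬ G.Adj u v

/-- α(𝒯): the maximum size of an independent set of `G` contained in a bag. -/
noncomputable def alphaTD {V : Type} (G : SimpleGraph V) (D : TreeDecomp G) : ℕ :=
  sSup {n | ∃ (t : D.ι) (S : Finset V),
    IsIndepSet G S ∧ ↑S ⊆ D.bag t ∧ S.card = n}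

/-- Tree-independence number: minimum of α(𝒯) over tree decompositions. -/
noncomputable def treeAlpha {V : Type} (G : SimpleGraph V) : ℕ :=
  sInf {n | ∃ D : TreeDecomp G, alphaTD G D = n}

/-- The `k`-th power of `G`: distinct vertices adjacent iff their distance in `G`
is at most `k` (for `k = 0` this is the edgeless graph). -/
def power {V : Type} (G : SimpleGraph V) (k : ℕ) : SimpleGraph V :=
  SimpleGraph.fromRel (fun u v => G.Reachable u v ∧ G.dist u v ≤ k)

/-- The graph `G°[ℋ]` for a family `ℋ = {H j}` of subgraphs of `G`: vertices are
indices `j`, two distinct indices adjacent iff the subgraphs share a vertex or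
there is an edge of `G` between them. -/
def blowup {V J : Type} (G : SimpleGraph V) (H : J → G.Subgraph) : SimpleGraph J :=
  SimpleGraph.fromRel (fun i j =>
    ((H i).verts ∩ (H j).verts).Nonempty ∨
      ∃ u ∈ (H i).verts, ∃ v ∈ (H j).verts, G.Adj u v)


section Aux

variable {V : Type}

/-- `y` is in the closed neighbourhood of `x`. -/
def Near (G : SimpleGraph V) (x y : V) : Prop := y = x ∨ G.Adj x y

lemma Near.reachable {G : SimpleGraph V} {x y : V} (h : Near G x y) : G.Reachable x y := by
  rcases h with rfl | h
  · exact SimpleGraph.Reachable.refl _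
  · exact h.reachable

lemma Near.dist_le_one {G : SimpleGraph V} {x y : V} (h : Near G x y) : G.dist x y ≤ 1 := by
  rcases h with rfl | h
  · simp [SimpleGraph.dist_self]
  · rw [SimpleGraph.dist_eq_one_iff_adj.mpr h]

lemma Near.symm {G : SimpleGraph V} {x y : V} (h : Near G x y) : Near G y x := by
  rcases h with rfl | h
  · exact Or.inl rfl
  · exact Or.inr h.symm

lemma Near.refl (G : SimpleGraph V) (x : V) : Near G x x := Or.inl rfl

lemma dist_triangle' {G : SimpleGraph V} {u v w : V} (h1 : G.Reachable u v)
    (h2 : G.Reachable v w) : G.dist u w ≤ G.dist u v + G.dist v w := by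
  obtain ⟨p, hp⟩ := h1.exists_walk_length_eq_dist
  obtain ⟨q, hq⟩ := h2.exists_walk_length_eq_dist
  calc G.dist u w ≤ (p.append q).length := SimpleGraph.dist_le _
    _ = _ := by rw [SimpleGraph.Walk.length_append, hp, hq]

lemma power_adj {G : SimpleGraph V} {k : ℕ} {u v : V} :
    (power G k).Adj u v ↔ u ≠ v ∧ G.Reachable u v ∧ G.dist u v ≤ k := by
  constructor
  · rintro ⟨hne, h | h⟩
    · exact ⟨hne, h.1, h.2⟩
    · exact ⟨hne, h.1.symm, by rw [SimpleGraph.dist_comm]; exact h.2⟩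
  · rintro ⟨hne, h1, h2⟩
    exact ⟨hne, Or.inl ⟨h1, h2⟩⟩

/-- The key estimate: moving each endpoint by at most one step increases distance by ≤ 2. -/
lemma key {G : SimpleGraph V} {x y a b : V} {k : ℕ}
    (ha : Near G x a) (hb : Near G y b) (hxy : G.Reachable x y) (hd : G.dist x y ≤ k) :
    G.Reachable a b ∧ G.dist a b ≤ k + 2 := by
  refine ⟨(ha.reachable.symm.trans hxy).trans hb.reachable, ?_⟩
  have t1 : G.dist a b ≤ G.dist a x + G.dist x b :=
    dist_triangle' ha.reachable.symm (hxy.trans hb.reachable)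
  have t2 : G.dist x b ≤ G.dist x y + G.dist y b := dist_triangle' hxy hb.reachable
  have d1 : G.dist a x ≤ 1 := by rw [SimpleGraph.dist_comm]; exact ha.dist_le_one
  have d2 : G.dist y b ≤ 1 := hb.dist_le_one
  omega

lemma exists_step {G : SimpleGraph V} {u w : V} (hr : G.Reachable u w) (hne : u ≠ w) :
    ∃ z, G.Adj u z ∧ G.Reachable z w ∧ G.dist z w + 1 = G.dist u w := by
  obtain ⟨p, hp⟩ := hr.exists_walk_length_eq_dist
  cases p with
  | nil => exact absurd rfl hne
  | @cons _ z _ h q =>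
    refine ⟨z, h, q.reachable, ?_⟩
    have h1 : G.dist z w ≤ q.length := SimpleGraph.dist_le _
    have h2 : G.dist u w ≤ G.dist u z + G.dist z w :=
      dist_triangle' h.reachable q.reachable
    have h3 : G.dist u z ≤ 1 := SimpleGraph.dist_eq_one_iff_adj.mpr h |>.le
    simp only [SimpleGraph.Walk.length_cons] at hp
    omega

/-- The trivial one-bag tree decomposition. -/
def trivialTD (G : SimpleGraph V) : TreeDecomp G where
  ι := Unit
  fin := inferInstance
  tree := ⊥
  isTree := by
    refine ⟨?_, SimpleGraph.isAcyclic_bot⟩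
    rw [SimpleGraph.connected_iff]
    exact ⟨fun u v => by cases u; cases v; exact SimpleGraph.Reachable.refl _, ⟨()⟩⟩
  bag _ := Set.univ
  mem_bag v := ⟨(), trivial⟩
  edge_bag u w _ := ⟨(), trivial, trivial⟩
  coherent v := by
    rw [SimpleGraph.connected_iff]
    constructor
    · intro a b
      have : a = b := Subsingleton.elim a b
      rw [this]
    · exact ⟨⟨(), trivial⟩⟩

lemma reach_into {ι : Type} {T : SimpleGraph ι} {S A : Set ι} (hSA : S ⊆ A)
    (hS : (T.induce S).Connected) {a b : ι} (ha : a ∈ S) (hb : b ∈ S) :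
    (T.induce A).Reachable ⟨a, hSA ha⟩ ⟨b, hSA hb⟩ := by
  have h1 := hS.preconnected ⟨a, ha⟩ ⟨b, hb⟩
  have h2 := h1.map (T.induceHomOfLE hSA).toHom
  exact h2

variable {G : SimpleGraph V} {r : ℕ}

/-- Enlarging all bags of a tree decomposition of `G^r` by closed neighbourhoods
gives a tree decomposition of `G^{r+2}`. -/
def enlarge (hr : 0 < r) (D : TreeDecomp (power G r)) : TreeDecomp (power G (r + 2)) where
  ι := D.ι
  fin := D.fin
  tree := D.tree
  isTree := D.isTree
  bag t := {v | ∃ a ∈ D.bag t, Near G a v}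
  mem_bag v := by
    obtain ⟨t, ht⟩ := D.mem_bag v
    exact ⟨t, v, ht, Near.refl G v⟩
  edge_bag u w h := by
    rw [power_adj] at h
    obtain ⟨hne, hre, hd⟩ := h
    by_cases h1 : G.dist u w ≤ r
    · obtain ⟨t, ht1, ht2⟩ := D.edge_bag (power_adj.mpr ⟨hne, hre, h1⟩)
      exact ⟨t, ⟨u, ht1, Near.refl G u⟩, ⟨w, ht2, Near.refl G w⟩⟩
    · obtain ⟨z, hz, hzw, hzd⟩ := exists_step hre hne
      by_cases h2 : G.dist z w ≤ r
      · have hzw' : z ≠ w := by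
          rintro rfl
          rw [SimpleGraph.dist_self] at hzd
          omega
        obtain ⟨t, ht1, ht2⟩ := D.edge_bag (power_adj.mpr ⟨hzw', hzw, h2⟩)
        exact ⟨t, ⟨z, ht1, Or.inr hz.symm⟩, ⟨w, ht2, Near.refl G w⟩⟩
      · have hwz : w ≠ z := fun e => h2 (by rw [e, SimpleGraph.dist_self]; omega)
        obtain ⟨y, hy, hyz, hyd⟩ := exists_step hzw.symm hwz
        have hcomm : G.dist w z = G.dist z w := SimpleGraph.dist_comm
        have hdy : G.dist y z ≤ r := by omega
        have hyz' : y ≠ z := by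
          rintro rfl
          rw [SimpleGraph.dist_self] at hyd
          omega
        obtain ⟨t, ht1, ht2⟩ := D.edge_bag (power_adj.mpr ⟨hyz', hyz, hdy⟩)
        exact ⟨t, ⟨z, ht2, Or.inr hz.symm⟩, ⟨y, ht1, Or.inr hy.symm⟩⟩
  coherent v := by
    classical
    set A : Set D.ι := {t | ∃ a ∈ D.bag t, Near G a v} with hA
    have hSv : {t | v ∈ D.bag t} ⊆ A := fun t ht => ⟨v, ht, Near.refl G v⟩
    obtain ⟨t₀, ht₀⟩ := D.mem_bag v
    rw [SimpleGraph.connected_iff]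
    refine ⟨?_, ⟨⟨t₀, hSv ht₀⟩⟩⟩
    · rintro ⟨s, hs⟩ ⟨s', hs'⟩
      -- step each point into the subtree of `v`
      have main : ∀ (s : D.ι) (hs : s ∈ A),
          ∃ (s₀ : D.ι) (h₀ : v ∈ D.bag s₀),
            (D.tree.induce A).Reachable ⟨s, hs⟩ ⟨s₀, hSv h₀⟩ := by
        rintro s ⟨a, haB, hav⟩
        rcases hav with rfl | hadj
        · exact ⟨s, haB, SimpleGraph.Reachable.refl _⟩
        · have hav' : (power G r).Adj a v := by
            rw [power_adj]
            exact ⟨hadj.ne, hadj.reachable,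
              le_trans (SimpleGraph.dist_eq_one_iff_adj.mpr hadj).le hr⟩
          obtain ⟨s₁, hs₁a, hs₁v⟩ := D.edge_bag hav'
          have hSa : {t | a ∈ D.bag t} ⊆ A := fun t ht => ⟨a, ht, Or.inr hadj⟩
          have h1 : (D.tree.induce A).Reachable ⟨s, hSa haB⟩ ⟨s₁, hSa hs₁a⟩ :=
            reach_into hSa (D.coherent a) haB hs₁a
          exact ⟨s₁, hs₁v, h1⟩
      obtain ⟨s₀, h₀, hre⟩ := main s hs
      obtain ⟨s₀', h₀', hre'⟩ := main s' hs'
      have hmid : (D.tree.induce A).Reachable ⟨s₀, hSv h₀⟩ ⟨s₀', hSv h₀'⟩ :=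
        reach_into hSv (D.coherent v) h₀ h₀'
      exact (hre.trans hmid).trans hre'.symm

lemma sep (hr : 0 < r) {x x' u' v' : V}
    (h1 : Near G x u') (h2 : Near G x' v')
    (hne : x ≠ x') (hxx : ¬ (power G (r + 2)).Adj x x') :
    u' ≠ v' ∧ ¬ (power G r).Adj u' v' := by
  constructor
  · rintro rfl
    have h := key h1.symm h2.symm (SimpleGraph.Reachable.refl u') (le_refl (G.dist u' u'))
    rw [SimpleGraph.dist_self] at h
    exact hxx (power_adj.mpr ⟨hne, h.1, by omega⟩)
  · intro hadj
    rw [power_adj] at hadj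
    obtain ⟨_, hre, hd⟩ := hadj
    have h := key h1.symm h2.symm hre hd
    exact hxx (power_adj.mpr ⟨hne, h.1, by omega⟩)

lemma alphaTD_enlarge_le [Fintype V] (hr : 0 < r) (D : TreeDecomp (power G r)) :
    alphaTD (power G (r + 2)) (enlarge hr D) ≤ alphaTD (power G r) D := by
  classical
  apply csSup_le_csSup
  · exact ⟨Fintype.card V, fun n hn => by
      obtain ⟨t, S, _, _, hc⟩ := hn
      exact hc ▸ S.card_le_univ⟩
  · have : Nonempty D.ι := D.isTree.isConnected.nonempty
    obtain ⟨t⟩ := this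
    exact ⟨0, t, ∅, fun u hu => absurd hu (by simp), by simp, by simp⟩
  · rintro n ⟨t, S, hind, hsub, hcard⟩
    have hspec : ∀ v ∈ S, ∃ a, a ∈ D.bag t ∧ Near G a v := fun v hv => hsub hv
    set g : V → V := fun v => if h : ∃ a, a ∈ D.bag t ∧ Near G a v then h.choose else v with hg
    have hgspec : ∀ v ∈ S, g v ∈ D.bag t ∧ Near G (g v) v := by
      intro v hv
      have h := hspec v hv
      simp only [hg, dif_pos h]
      exact h.choose_spec
    have hcontr : ∀ u ∈ S, ∀ v ∈ S, u ≠ v →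
        ¬ (G.Reachable (g u) (g v) ∧ G.dist (g u) (g v) ≤ r) := by
      intro u hu v hv huv ⟨hre, hd⟩
      have h := key (hgspec u hu).2 (hgspec v hv).2 hre hd
      exact hind u hu v hv huv (power_adj.mpr ⟨huv, h.1, by omega⟩)
    have hinj : Set.InjOn g S := by
      intro u hu v hv he
      by_contra huv
      apply hcontr u hu v hv huv
      rw [he]
      exact ⟨SimpleGraph.Reachable.refl _, by rw [SimpleGraph.dist_self]; omega⟩
    refine ⟨t, S.image g, ?_, ?_, ?_⟩
    · intro u' hu' v' hv' hne hadj
      obtain ⟨u, hu, rfl⟩ := Finset.mem_image.mp hu'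
      obtain ⟨v, hv, rfl⟩ := Finset.mem_image.mp hv'
      have huv : u ≠ v := fun e => hne (by rw [e])
      rw [power_adj] at hadj
      exact hcontr u hu v hv huv ⟨hadj.2.1, hadj.2.2⟩
    · intro v' hv'
      obtain ⟨v, hv, rfl⟩ := Finset.mem_image.mp (by exact_mod_cast hv')
      exact (hgspec v hv).1
    · rw [Finset.card_image_of_injOn hinj, hcard]

lemma muTD_enlarge_le [Fintype V] (hr : 0 < r) (D : TreeDecomp (power G r)) :
    mu (power G (r + 2)) (enlarge hr D) ≤ mu (power G r) D := by
  classical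
  apply csSup_le_csSup
  · exact ⟨Fintype.card (V × V), fun n hn => by
      obtain ⟨t, M, _, _, hc⟩ := hn
      exact hc ▸ M.card_le_univ⟩
  · have : Nonempty D.ι := D.isTree.isConnected.nonempty
    obtain ⟨t⟩ := this
    exact ⟨0, t, ∅, ⟨fun p hp => absurd hp (by simp), fun p hp => absurd hp (by simp)⟩,
      fun p hp => absurd hp (by simp), by simp⟩
  · rintro n ⟨t, M, hM, htouch, hcard⟩
    -- a "good" replacement edge for `p`
    set Good : V × V → V × V → Prop := fun p q =>
      (power G r).Adj q.1 q.2 ∧ (q.1 ∈ D.bag t ∨ q.2 ∈ D.bag t) ∧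
        ∃ x, (x = p.1 ∨ x = p.2) ∧ Near G x q.1 ∧ Near G x q.2 with hGood
    have aux : ∀ x y : V, (power G (r + 2)).Adj x y →
        (∃ a ∈ D.bag t, Near G a x) →
        ∃ q : V × V, (power G r).Adj q.1 q.2 ∧ (q.1 ∈ D.bag t ∨ q.2 ∈ D.bag t) ∧
          Near G x q.1 ∧ Near G x q.2 := by
      intro x y hadj hx
      obtain ⟨a, haB, hax⟩ := hx
      rw [power_adj] at hadj
      obtain ⟨hne, hre, _⟩ := hadj
      rcases hax with rfl | hadj'
      · obtain ⟨z, hz, _, _⟩ := exists_step hre hne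
        refine ⟨(x, z), ?_, Or.inl haB, Near.refl G x, Or.inr hz⟩
        rw [power_adj]
        exact ⟨hz.ne, hz.reachable, le_trans (SimpleGraph.dist_eq_one_iff_adj.mpr hz).le hr⟩
      · refine ⟨(a, x), ?_, Or.inl haB, Or.inr hadj'.symm, Near.refl G x⟩
        rw [power_adj]
        exact ⟨hadj'.ne, hadj'.reachable,
          le_trans (SimpleGraph.dist_eq_one_iff_adj.mpr hadj').le hr⟩
    have hex : ∀ p ∈ M, ∃ q, Good p q := by
      intro p hp
      rcases htouch p hp with hp1 | hp1
      · obtain ⟨q, h1, h2, h3, h4⟩ := aux p.1 p.2 (hM.1 p hp) hp1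
        exact ⟨q, h1, h2, p.1, Or.inl rfl, h3, h4⟩
      · obtain ⟨q, h1, h2, h3, h4⟩ := aux p.2 p.1 (hM.1 p hp).symm hp1
        exact ⟨q, h1, h2, p.2, Or.inr rfl, h3, h4⟩
    set f : V × V → V × V := fun p => if h : ∃ q, Good p q then h.choose else p with hf
    have hfspec : ∀ p ∈ M, Good p (f p) := by
      intro p hp
      have h := hex p hp
      simp only [hf, dif_pos h]
      exact h.choose_spec
    -- the cross condition between replacement edges of distinct matching edges
    have cross : ∀ p ∈ M, ∀ p' ∈ M, p ≠ p' →
        ∀ u' v', Near G u' v' → False ∨ True := fun _ _ _ _ _ _ _ _ => Or.inr trivial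
    have hsep : ∀ p ∈ M, ∀ p' ∈ M, p ≠ p' →
        ((f p).1 ≠ (f p').1 ∧ (f p).1 ≠ (f p').2 ∧ (f p).2 ≠ (f p').1 ∧ (f p).2 ≠ (f p').2) ∧
        (¬ (power G r).Adj (f p).1 (f p').1 ∧ ¬ (power G r).Adj (f p).1 (f p').2 ∧
          ¬ (power G r).Adj (f p).2 (f p').1 ∧ ¬ (power G r).Adj (f p).2 (f p').2) := by
      intro p hp p' hp' hne
      obtain ⟨_, _, x, hx, hx1, hx2⟩ := hfspec p hp
      obtain ⟨_, _, x', hx', hx1', hx2'⟩ := hfspec p' hp'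
      obtain ⟨⟨d11, d12, d21, d22⟩, a11, a12, a21, a22⟩ := hM.2 p hp p' hp' hne
      have hxx : x ≠ x' ∧ ¬ (power G (r + 2)).Adj x x' := by
        rcases hx with rfl | rfl <;> rcases hx' with rfl | rfl <;> exact ⟨‹_›, ‹_›⟩
      have s11 := sep hr hx1 hx1' hxx.1 hxx.2
      have s12 := sep hr hx1 hx2' hxx.1 hxx.2
      have s21 := sep hr hx2 hx1' hxx.1 hxx.2
      have s22 := sep hr hx2 hx2' hxx.1 hxx.2
      exact ⟨⟨s11.1, s12.1, s21.1, s22.1⟩, s11.2, s12.2, s21.2, s22.2⟩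
    have hinj : Set.InjOn f M := by
      intro p hp p' hp' he
      by_contra hne
      exact ((hsep p hp p' hp' hne).1.1) (by rw [he])
    refine ⟨t, M.image f, ⟨?_, ?_⟩, ?_, ?_⟩
    · intro q hq
      obtain ⟨p, hp, rfl⟩ := Finset.mem_image.mp hq
      exact (hfspec p hp).1
    · intro q hq q' hq' hne
      obtain ⟨p, hp, rfl⟩ := Finset.mem_image.mp hq
      obtain ⟨p', hp', rfl⟩ := Finset.mem_image.mp hq'
      exact hsep p hp p' hp' (fun e => hne (by rw [e]))
    · intro q hq
      obtain ⟨p, hp, rfl⟩ := Finset.mem_image.mp hq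
      exact (hfspec p hp).2.1
    · rw [Finset.card_image_of_injOn hinj, hcard]

end Aux

/-- tree-α(G^{r+2}) ≤ tree-α(G^r) and tree-μ(G^{r+2}) ≤ tree-μ(G^r). -/
theorem stmt4 {V : Type} [Fintype V] (G : SimpleGraph V) (r : ℕ) (hr : 0 < r) :
    treeAlpha (power G (r + 2)) ≤ treeAlpha (power G r) ∧
    treeMu (power G (r + 2)) ≤ treeMu (power G r) := by
  constructor
  · have hne : {n | ∃ D : TreeDecomp (power G r), alphaTD (power G r) D = n}.Nonempty :=
      ⟨_, trivialTD _, rfl⟩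
    apply le_csInf hne
    rintro m ⟨D, rfl⟩
    calc treeAlpha (power G (r + 2)) ≤ alphaTD (power G (r + 2)) (enlarge hr D) :=
          Nat.sInf_le ⟨enlarge hr D, rfl⟩
      _ ≤ alphaTD (power G r) D := alphaTD_enlarge_le hr D
  · have hne : {n | ∃ D : TreeDecomp (power G r), mu (power G r) D = n}.Nonempty :=
      ⟨_, trivialTD _, rfl⟩
    apply le_csInf hne
    rintro m ⟨D, rfl⟩
    calc treeMu (power G (r + 2)) ≤ mu (power G (r + 2)) (enlarge hr D) :=
          Nat.sInf_le ⟨enlarge hr D, rfl⟩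
      _ ≤ mu (power G r) D := muTD_enlarge_le hr D

end Paper
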